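/- Let ε > 0 and u > 0 be such that λ(B(1, u, ε)) > 0, and let s^{ε,u} ∈ (0,1) be the unique zero of s ↦ λ(B(s, u, ε)). Then μ̄(s^{ε,u}) ≤ u ≤ μ̂(s^{ε,u}) ≤ u + 2ε, where μ̄(s) := (1/n) Σ_{j=1}^n μ_j(s) and μ̂(s) := max_{1≤j≤n} μ_j(s). -/

import Mathlib

open Matrix Filter Set Topology Asymptotics

noncomputable section

/-- The mutation matrix `T` (discrete Neumann Laplacian): `T i j = 1` if `|i-j| = 1`,
diagonal entries `-1` at the ends and `-2` inside (minus number of neighbors), `0` otherwise. -/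
def mutT (n : ℕ) : Matrix (Fin n) (Fin n) ℝ :=
  Matrix.of fun i j =>
    if ((i : ℕ) + 1 = (j : ℕ) ∨ (j : ℕ) + 1 = (i : ℕ)) then 1
    else if i = j then
      -((if 0 < (i : ℕ) then (1 : ℝ) else 0) + (if (i : ℕ) + 1 < n then (1 : ℝ) else 0))
    else 0

/-- Monod kinetics `μ(s) = m s / (a + s)`. -/
def monod (m a s : ℝ) : ℝ := m * s / (a + s)

/-- The largest eigenvalue of a (symmetric) real matrix. -/
def maxEig {n : ℕ} (A : Matrix (Fin n) (Fin n) ℝ) : ℝ :=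
  sSup {t : ℝ | ∃ v : Fin n → ℝ, v ≠ 0 ∧ A.mulVec v = t • v}

/-- The matrix `B(s,u,ε) = diag(μ₁(s),…,μₙ(s)) - u Iₙ + ε T`. -/
def Bmat (n : ℕ) (m a : Fin n → ℝ) (s u ε : ℝ) : Matrix (Fin n) (Fin n) ℝ :=
  Matrix.diagonal (fun i => monod (m i) (a i) s) - u • (1 : Matrix (Fin n) (Fin n) ℝ)
    + ε • mutT n

/-- `(x, s)` is a solution of the chemostat system with mutation (S). -/
def IsSol (n : ℕ) (m a : Fin n → ℝ) (ε u : ℝ) (x : ℝ → Fin n → ℝ) (s : ℝ → ℝ) : Prop :=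
  ∀ t : ℝ, 0 ≤ t →
    (∀ i, HasDerivAt (fun τ => x τ i)
        ((monod (m i) (a i) (s t) - u) * x t i + ε * (mutT n).mulVec (x t) i) t) ∧
    HasDerivAt s (-(∑ j, monod (m j) (a j) (s t) * x t j) + u * (1 - s t)) t

/-- Admissible initial conditions `D = (ℝ₊ⁿ \ {0}) × [0,1]`. -/
def InD (n : ℕ) (x0 : Fin n → ℝ) (s0 : ℝ) : Prop :=
  (∀ i, 0 ≤ x0 i) ∧ x0 ≠ 0 ∧ s0 ∈ Set.Icc (0 : ℝ) 1



variable {n : ℕ} {A : Matrix (Fin n) (Fin n) ℝ}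

lemma dot_mulVec_symm (hA : A.IsHermitian) (x y : Fin n → ℝ) :
    x ⬝ᵥ (A *ᵥ y) = (A *ᵥ x) ⬝ᵥ y := by
  have hT : Aᵀ = A := by
    rw [← Matrix.conjTranspose_eq_transpose_of_trivial]; exact hA
  rw [Matrix.dotProduct_mulVec, ← Matrix.mulVec_transpose, hT]

lemma mem_spec_iff (hA : A.IsHermitian) (t : ℝ) :
    t ∈ {t : ℝ | ∃ v : Fin n → ℝ, v ≠ 0 ∧ A.mulVec v = t • v} ↔
      ∃ i, hA.eigenvalues i = t := by
  constructor
  · rintro ⟨v, hv, hAv⟩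
    set b := hA.eigenvectorBasis with hb
    have hv' : (WithLp.toLp 2 v : EuclideanSpace ℝ (Fin n)) ≠ 0 := (WithLp.toLp_eq_zero 2).ne.2 hv
    have hrepr : b.repr (WithLp.toLp 2 v) ≠ 0 := by
      simpa using (b.repr.map_eq_zero_iff).not.mpr hv'
    obtain ⟨i, hi⟩ := Function.ne_iff.mp ((WithLp.ofLp_eq_zero 2).ne.2 hrepr)
    refine ⟨i, ?_⟩
    set w : Fin n → ℝ := ⇑(b i) with hw
    have hci : b.repr (WithLp.toLp 2 v) i = w ⬝ᵥ v := by
      rw [b.repr_apply_apply]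
      simp [PiLp.inner_apply, dotProduct, RCLike.inner_apply, hw, mul_comm]
    have h1 : w ⬝ᵥ (A *ᵥ v) = hA.eigenvalues i * (w ⬝ᵥ v) := by
      rw [dot_mulVec_symm hA, hw, hA.mulVec_eigenvectorBasis i, smul_dotProduct]
      rfl
    rw [hAv] at h1
    have h2 : w ⬝ᵥ (t • v) = t * (w ⬝ᵥ v) := by
      rw [dotProduct_smul]; rfl
    rw [h2] at h1
    have hcne : (w ⬝ᵥ v) ≠ 0 := by
      rw [← hci]; intro h; apply hi; rw [h]; rfl
    exact mul_right_cancel₀ hcne h1.symm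
  · rintro ⟨i, hi⟩
    exact ⟨⇑(hA.eigenvectorBasis i), (WithLp.ofLp_eq_zero 2).ne.2 (hA.eigenvectorBasis.orthonormal.ne_zero i),
      by rw [hA.mulVec_eigenvectorBasis i, hi]⟩

lemma spec_eq_range (hA : A.IsHermitian) :
    {t : ℝ | ∃ v : Fin n → ℝ, v ≠ 0 ∧ A.mulVec v = t • v} = Set.range hA.eigenvalues := by
  ext t; rw [mem_spec_iff hA]; rfl

lemma spec_bddAbove (hA : A.IsHermitian) :
    BddAbove {t : ℝ | ∃ v : Fin n → ℝ, v ≠ 0 ∧ A.mulVec v = t • v} := by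
  rw [spec_eq_range hA]; exact (Set.finite_range _).bddAbove

lemma eigenvalue_le_maxEig (hA : A.IsHermitian) (i : Fin n) :
    hA.eigenvalues i ≤ maxEig A :=
  le_csSup (spec_bddAbove hA) ((mem_spec_iff hA _).mpr ⟨i, rfl⟩)

lemma maxEig_le (hn : 1 ≤ n) (hA : A.IsHermitian) {c : ℝ}
    (h : ∀ t ∈ {t : ℝ | ∃ v : Fin n → ℝ, v ≠ 0 ∧ A.mulVec v = t • v}, t ≤ c) :
    maxEig A ≤ c :=
  csSup_le ⟨hA.eigenvalues ⟨0, hn⟩, (mem_spec_iff hA _).mpr ⟨⟨0, hn⟩, rfl⟩⟩ h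

lemma quadform_decomp (hA : A.IsHermitian) (w : Fin n → ℝ) :
    ∃ y : Fin n → ℝ, w ⬝ᵥ (A *ᵥ w) = ∑ i, hA.eigenvalues i * (y i)^2 ∧
      w ⬝ᵥ w = ∑ i, (y i)^2 := by
  classical
  have hUdef : (↑(hA.eigenvectorUnitary) : Matrix (Fin n) (Fin n) ℝ) =
      (↑(hA.eigenvectorUnitary) : Matrix (Fin n) (Fin n) ℝ) := rfl
  obtain ⟨U, hU⟩ : ∃ U : Matrix (Fin n) (Fin n) ℝ, U = ↑(hA.eigenvectorUnitary) := ⟨_, rfl⟩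
  have hsU : star U = Uᵀ := by
    rw [Matrix.star_eq_conjTranspose, Matrix.conjTranspose_eq_transpose_of_trivial]
  have hUsU : U * star U = 1 := by
    rw [hU]; exact (Unitary.mem_iff.mp hA.eigenvectorUnitary.2).2
  have hA' : A = U * Matrix.diagonal hA.eigenvalues * star U := by
    rw [hU]
    have := hA.spectral_theorem
    simpa [Function.comp] using this
  have hvmul : w ᵥ* U = star U *ᵥ w := by rw [hsU, Matrix.mulVec_transpose]
  refine ⟨star U *ᵥ w, ?_, ?_⟩
  · calc w ⬝ᵥ (A *ᵥ w)
        = w ⬝ᵥ (U *ᵥ (Matrix.diagonal hA.eigenvalues *ᵥ (star U *ᵥ w))) := by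
          conv_lhs => rw [hA']
          rw [← Matrix.mulVec_mulVec, ← Matrix.mulVec_mulVec]
      _ = (w ᵥ* U) ⬝ᵥ (Matrix.diagonal hA.eigenvalues *ᵥ (star U *ᵥ w)) := by
          rw [Matrix.dotProduct_mulVec]
      _ = ∑ i, hA.eigenvalues i * ((star U *ᵥ w) i)^2 := by
          rw [hvmul]
          simp only [Matrix.mulVec_diagonal, dotProduct]
          exact Finset.sum_congr rfl fun i _ => by ring
  · calc w ⬝ᵥ w = ((U * star U) *ᵥ w) ⬝ᵥ w := by rw [hUsU, Matrix.one_mulVec]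
      _ = (U *ᵥ (star U *ᵥ w)) ⬝ᵥ w := by rw [← Matrix.mulVec_mulVec]
      _ = (w ᵥ* U) ⬝ᵥ (star U *ᵥ w) := by
          rw [dotProduct_comm, Matrix.dotProduct_mulVec]
      _ = ∑ i, ((star U *ᵥ w) i)^2 := by
          rw [hvmul]
          simp only [dotProduct]
          exact Finset.sum_congr rfl fun i _ => (sq _).symm

lemma rayleigh_le_maxEig (hA : A.IsHermitian) (w : Fin n → ℝ) :
    w ⬝ᵥ (A *ᵥ w) ≤ maxEig A * (w ⬝ᵥ w) := by
  obtain ⟨y, h1, h2⟩ := quadform_decomp hA w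
  rw [h1, h2, Finset.mul_sum]
  exact Finset.sum_le_sum fun i _ =>
    mul_le_mul_of_nonneg_right (eigenvalue_le_maxEig hA i) (sq_nonneg _)

lemma mutT_apply {n : ℕ} (i j : Fin n) :
    mutT n i j = (if (i : ℕ) + 1 = (j : ℕ) then (1:ℝ) else 0)
      + (if (j : ℕ) + 1 = (i : ℕ) then (1:ℝ) else 0)
      + (if i = j then
          -((if 0 < (i : ℕ) then (1 : ℝ) else 0) + (if (i : ℕ) + 1 < n then (1 : ℝ) else 0))
         else 0) := by
  have hij : i = j ↔ (i : ℕ) = (j : ℕ) := Fin.ext_iff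
  unfold mutT
  rw [Matrix.of_apply]
  by_cases h1 : (i:ℕ)+1=(j:ℕ) <;> by_cases h2 : (j:ℕ)+1=(i:ℕ) <;>
    by_cases h3 : (i:ℕ) = (j:ℕ) <;>
    simp [h1, h2, hij, h3] <;> omega

lemma sum_ind_succ {n : ℕ} (i : Fin n) :
    ∑ j : Fin n, (if (i : ℕ) + 1 = (j : ℕ) then (1:ℝ) else 0)
      = if (i : ℕ) + 1 < n then 1 else 0 := by
  rw [Fin.sum_univ_eq_sum_range (fun k => if (i:ℕ)+1 = k then (1:ℝ) else 0)]
  rw [Finset.sum_ite_eq (Finset.range n) ((i:ℕ)+1) (fun _ => (1:ℝ))]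
  simp [Finset.mem_range]

lemma sum_ind_pred {n : ℕ} (i : Fin n) :
    ∑ j : Fin n, (if (j : ℕ) + 1 = (i : ℕ) then (1:ℝ) else 0)
      = if 0 < (i : ℕ) then 1 else 0 := by
  rw [Fin.sum_univ_eq_sum_range (fun k => if k + 1 = (i:ℕ) then (1:ℝ) else 0)]
  by_cases h : 0 < (i : ℕ)
  · rw [if_pos h]
    rw [show (fun k => if k + 1 = (i:ℕ) then (1:ℝ) else 0)
        = fun k => if (i:ℕ) - 1 = k then (1:ℝ) else 0 from funext fun k => if_congr (by omega) rfl rfl]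
    rw [Finset.sum_ite_eq (Finset.range n) ((i:ℕ)-1) (fun _ => (1:ℝ))]
    have : (i:ℕ) - 1 ∈ Finset.range n := Finset.mem_range.mpr (by have := i.isLt; omega)
    simp [this]
  · rw [if_neg h]
    refine Finset.sum_eq_zero fun k _ => if_neg (by omega)

lemma mutT_rowsum {n : ℕ} (i : Fin n) : ∑ j, mutT n i j = 0 := by
  simp only [mutT_apply]
  rw [Finset.sum_add_distrib, Finset.sum_add_distrib, sum_ind_succ, sum_ind_pred]
  rw [Finset.sum_ite_eq Finset.univ i]
  simp only [Finset.mem_univ, if_true]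
  split_ifs <;> ring

lemma mutT_mulVec_one {n : ℕ} : (mutT n) *ᵥ (fun _ => (1:ℝ)) = 0 := by
  funext i
  simp only [Matrix.mulVec, dotProduct, mul_one, Pi.zero_apply]
  exact mutT_rowsum i

lemma mutT_offdiag_abs {n : ℕ} (i : Fin n) :
    ∑ j ∈ Finset.univ.erase i, |mutT n i j| = -(mutT n i i) := by
  have hdiag : mutT n i i
      = -((if 0 < (i : ℕ) then (1 : ℝ) else 0) + (if (i : ℕ) + 1 < n then (1 : ℝ) else 0)) := by
    rw [mutT_apply]; simp
  have hoff : ∀ j ∈ Finset.univ.erase i, |mutT n i j| = mutT n i j := by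
    intro j hj
    have hne : j ≠ i := Finset.ne_of_mem_erase hj
    have hne' : ¬ i = j := fun h => hne h.symm
    rw [mutT_apply, if_neg hne']
    split_ifs <;> simp
  rw [Finset.sum_congr rfl hoff]
  have hsum : ∑ j ∈ Finset.univ.erase i, mutT n i j = (∑ j, mutT n i j) - mutT n i i := by
    rw [← Finset.sum_erase_add Finset.univ _ (Finset.mem_univ i)]; ring
  rw [hsum, mutT_rowsum]; ring

lemma mutT_isHermitian {n : ℕ} : (mutT n).IsHermitian := by
  apply Matrix.ext
  intro i j
  rw [Matrix.conjTranspose_apply, star_trivial]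
  by_cases h : i = j
  · subst h; rfl
  · have h' : ¬ j = i := fun hh => h hh.symm
    rw [mutT_apply, mutT_apply, if_neg h, if_neg h']
    ring

lemma smul_isHermitian {n : ℕ} {A : Matrix (Fin n) (Fin n) ℝ} (hA : A.IsHermitian) (c : ℝ) :
    (c • A).IsHermitian :=
  Matrix.IsHermitian.ext fun i j => by
    have h := hA.apply i j
    simp only [star_trivial] at h ⊢
    simp [Matrix.smul_apply, h]

lemma Bmat_isHermitian {n : ℕ} (m a : Fin n → ℝ) (s u ε : ℝ) :
    (Bmat n m a s u ε).IsHermitian :=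
  (((Matrix.isHermitian_diagonal _).sub (smul_isHermitian Matrix.isHermitian_one u)).add
    (smul_isHermitian mutT_isHermitian ε))

lemma Bmat_diag {n : ℕ} (m a : Fin n → ℝ) (s u ε : ℝ) (i : Fin n) :
    Bmat n m a s u ε i i = monod (m i) (a i) s - u + ε * mutT n i i := by
  simp [Bmat, Matrix.diagonal_apply_eq, Matrix.one_apply_eq]

lemma Bmat_offdiag {n : ℕ} (m a : Fin n → ℝ) (s u ε : ℝ) {i j : Fin n} (h : j ≠ i) :
    Bmat n m a s u ε i j = ε * mutT n i j := by
  have h' : i ≠ j := h.symm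
  simp [Bmat, Matrix.diagonal_apply_ne _ h', Matrix.one_apply_ne h']

lemma mutT_diag_ge {n : ℕ} (i : Fin n) : -2 ≤ mutT n i i := by
  rw [mutT_apply]
  simp only [if_pos rfl]
  split_ifs <;> norm_num


/-- at the coexistence substrate value `s* = s^{ε,u}` (the zero of
`s ↦ λ(B(s,u,ε))`) one has `μ̄(s*) ≤ u ≤ μ̂(s*) ≤ u + 2ε`. -/
theorem stmt_8 (n : ℕ) (hn : 1 ≤ n) (m a : Fin n → ℝ)
    (hm : ∀ i, 0 < m i) (ha : ∀ i, 0 < a i)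
    (ε u : ℝ) (hε : 0 < ε) (hu : 0 < u)
    (hpos : 0 < maxEig (Bmat n m a 1 u ε))
    (sstar : ℝ) (hs : sstar ∈ Set.Ioo (0 : ℝ) 1)
    (hzero : maxEig (Bmat n m a sstar u ε) = 0) :
    (1 / (n : ℝ)) * ∑ j, monod (m j) (a j) sstar ≤ u ∧
    u ≤ ⨆ j : Fin n, monod (m j) (a j) sstar ∧
    (⨆ j : Fin n, monod (m j) (a j) sstar) ≤ u + 2 * ε := by
  haveI : NeZero n := ⟨by omega⟩
  haveI : Nonempty (Fin n) := ⟨⟨0, hn⟩⟩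
  set B := Bmat n m a sstar u ε with hB
  have hBh : B.IsHermitian := Bmat_isHermitian m a sstar u ε
  set μ : Fin n → ℝ := fun j => monod (m j) (a j) sstar with hμ
  have hbdd : BddAbove (Set.range μ) := (Set.finite_range μ).bddAbove
  have hn0 : (0:ℝ) < n := by exact_mod_cast hn
  -- Part 1 : mean ≤ u
  have part1 : (1 / (n : ℝ)) * ∑ j, μ j ≤ u := by
    have hBone : B *ᵥ (fun _ => (1:ℝ)) = fun i => μ i - u := by
      rw [hB]
      unfold Bmat
      rw [Matrix.add_mulVec, Matrix.sub_mulVec, Matrix.smul_mulVec, Matrix.smul_mulVec,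
        mutT_mulVec_one, smul_zero, Matrix.one_mulVec]
      funext i
      simp [Matrix.mulVec_diagonal, hμ]
    have hray := rayleigh_le_maxEig hBh (fun _ => (1:ℝ))
    rw [hzero, zero_mul, hBone] at hray
    have hdot : (fun _ => (1:ℝ)) ⬝ᵥ (fun i => μ i - u) = (∑ j, μ j) - n * u := by
      simp [dotProduct, Finset.sum_sub_distrib, Finset.card_univ, mul_comm]
    rw [hdot] at hray
    rw [div_mul_eq_mul_div, one_mul, div_le_iff₀ hn0]
    linarith [hray]
  -- Part 2 : u ≤ sup
  have part2 : u ≤ ⨆ j, μ j := by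
    have hle : maxEig B ≤ (⨆ j, μ j) - u := by
      apply maxEig_le hn hBh
      rintro t ⟨v, hv, hAv⟩
      have hev : Module.End.HasEigenvalue (Matrix.toLin' B) t := by
        apply Module.End.hasEigenvalue_of_hasEigenvector (x := v)
        exact ⟨by rw [Module.End.mem_eigenspace_iff, Matrix.toLin'_apply, hAv], hv⟩
      obtain ⟨k, hk⟩ := eigenvalue_mem_ball hev
      rw [Metric.mem_closedBall, Real.dist_eq] at hk
      have hsum : ∑ j ∈ Finset.univ.erase k, ‖B k j‖ = ε * (-(mutT n k k)) := by
        rw [← mutT_offdiag_abs k, Finset.mul_sum]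
        refine Finset.sum_congr rfl fun j hj => ?_
        rw [Real.norm_eq_abs, hB, Bmat_offdiag m a sstar u ε (Finset.ne_of_mem_erase hj),
          abs_mul, abs_of_pos hε]
      rw [hsum, hB, Bmat_diag] at hk
      have habs := abs_le.mp hk
      have hμk : μ k ≤ ⨆ j, μ j := le_ciSup hbdd k
      have := habs.2
      nlinarith [this, hμk]
    rw [hzero] at hle
    linarith
  -- Part 3 : sup ≤ u + 2ε
  have part3 : (⨆ j, μ j) ≤ u + 2 * ε := by
    obtain ⟨j₀, hj₀⟩ := Finite.exists_max μ
    have hsup : (⨆ j, μ j) = μ j₀ :=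
      le_antisymm (ciSup_le hj₀) (le_ciSup hbdd j₀)
    rw [hsup]
    have hray := rayleigh_le_maxEig hBh (Pi.single j₀ 1)
    rw [hzero, zero_mul] at hray
    have hquad : (Pi.single j₀ 1 : Fin n → ℝ) ⬝ᵥ (B *ᵥ Pi.single j₀ 1) = B j₀ j₀ := by
      rw [Matrix.mulVec_single, single_dotProduct]
      simp
    rw [hquad, hB, Bmat_diag] at hray
    have hT := mutT_diag_ge j₀
    nlinarith [hray, hT]
  exact ⟨part1, part2, part3⟩
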